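/- Let 2 ≤ d ≤ n and let A = {S ⊆ [n] : |S| ≥ n − d}. Then A ∪ A = A (where A ∪ A = {S ∪ T : S, T ∈ A}), VC-dim(A ∪ A) = d, and |A| = C(n, ≤ d). In particular, the bound |A| ≤ O(n^{⌈d/2⌉}) fails when symmetric difference is replaced by union in the condition VC-dim(A △ A) ≤ d. -/

import Mathlib

open Finset

lemma union_counterexample_aux (n d : ℕ) (hdn : d ≤ n)
    (A : Finset (Finset (Fin n)))
    (hA : A = Finset.univ.filter fun S : Finset (Fin n) => n - d ≤ S.card) :
    A.vcDim = d := by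
  have hmem : ∀ S : Finset (Fin n), S ∈ A ↔ n - d ≤ S.card := by
    intro S; simp [hA]
  refine le_antisymm ?_ ?_
  · apply Finset.sup_le
    intro s hs
    rw [Finset.mem_shatterer] at hs
    obtain ⟨u, hu, hsu⟩ := hs (Finset.empty_subset s)
    have hud : n - d ≤ u.card := (hmem u).1 hu
    have hdisj : Disjoint s u := Finset.disjoint_iff_inter_eq_empty.2 hsu
    have hle : s.card + u.card ≤ n := by
      have := Finset.card_union_of_disjoint hdisj ▸ Finset.card_le_univ (s ∪ u)
      simpa [Finset.card_union_of_disjoint hdisj] using Finset.card_le_univ (s ∪ u)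
    omega
  · obtain ⟨s, hs⟩ : ∃ s : Finset (Fin n), s.card = d := by
      obtain ⟨s, _, hs⟩ := Finset.exists_subset_card_eq (s := (Finset.univ : Finset (Fin n))) (n := d)
        (by simpa using hdn)
      exact ⟨s, hs⟩
    have hshat : A.Shatters s := by
      intro t ht
      refine ⟨t ∪ sᶜ, ?_, ?_⟩
      · rw [hmem]
        have : n - d ≤ sᶜ.card := by
          rw [Finset.card_compl, hs]; simp
        exact this.trans (Finset.card_le_card Finset.subset_union_right)
      · rw [Finset.inter_union_distrib_left, Finset.inter_compl, Finset.union_empty,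
          Finset.inter_eq_right.2 ht]
    calc d = s.card := hs.symm
    _ ≤ A.vcDim := hshat.card_le_vcDim

/-- For `2 ≤ d ≤ n` the family `A = {S ⊆ [n] : |S| ≥ n - d}` satisfies `A ∪ A = A`,
`VC-dim(A ∪ A) = d`, and `|A| = C(n, ≤ d)`.  (Hence the sumset bound
`|A| ≤ O(n^{⌈d/2⌉})` fails when symmetric difference is replaced by union.) -/
theorem union_counterexample (n d : ℕ) (hd : 2 ≤ d) (hdn : d ≤ n)
    (A : Finset (Finset (Fin n)))
    (hA : A = Finset.univ.filter fun S : Finset (Fin n) => n - d ≤ S.card) :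
    Finset.image₂ (· ∪ ·) A A = A ∧
    (Finset.image₂ (· ∪ ·) A A).vcDim = d ∧
    A.card = ∑ i ∈ Finset.range (d + 1), n.choose i := by
  have hmem : ∀ S : Finset (Fin n), S ∈ A ↔ n - d ≤ S.card := by
    intro S; simp [hA]
  have hAne : A.Nonempty := ⟨Finset.univ, (hmem _).2 (by simp)⟩
  have h1 : Finset.image₂ (· ∪ ·) A A = A := by
    apply Finset.Subset.antisymm
    · intro S hS
      rw [Finset.mem_image₂] at hS
      obtain ⟨u, hu, v, hv, rfl⟩ := hS
      rw [hmem]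
      exact ((hmem u).1 hu).trans (Finset.card_le_card Finset.subset_union_left)
    · intro S hS
      exact Finset.mem_image₂.2 ⟨S, hS, S, hS, Finset.union_self S⟩
  refine ⟨h1, ?_, ?_⟩
  · rw [h1]
    exact union_counterexample_aux n d hdn A hA
  · have hbij : A.card = (Finset.univ.filter fun S : Finset (Fin n) => S.card ≤ d).card := by
      apply Finset.card_bij (fun S _ => Sᶜ)
      · intro S hS
        simp only [Finset.mem_filter, Finset.mem_univ, true_and]
        rw [Finset.card_compl]
        have := (hmem S).1 hS
        simp only [Fintype.card_fin]
        omega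
      · intro S _ T _ h
        simpa using congrArg compl h
      · intro T hT
        refine ⟨Tᶜ, ?_, by simp⟩
        rw [hmem, Finset.card_compl]
        simp only [Finset.mem_filter, Finset.mem_univ, true_and] at hT
        simp only [Fintype.card_fin]
        omega
    rw [hbij]
    have hsplit : (Finset.univ.filter fun S : Finset (Fin n) => S.card ≤ d) =
        (Finset.range (d + 1)).biUnion (fun i => Finset.powersetCard i Finset.univ) := by
      ext S
      simp only [Finset.mem_filter, Finset.mem_univ, true_and, Finset.mem_biUnion,
        Finset.mem_range, Finset.mem_powersetCard, Finset.subset_univ, true_and]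
      constructor
      · intro h; exact ⟨S.card, by omega, rfl⟩
      · rintro ⟨i, hi, rfl⟩; omega
    rw [hsplit, Finset.card_biUnion]
    · apply Finset.sum_congr rfl
      intro i _
      rw [Finset.card_powersetCard]
      simp
    · intro i _ j _ hij
      simp only [Finset.disjoint_left, Finset.mem_powersetCard]
      rintro S ⟨_, rfl⟩ ⟨_, h⟩
      exact hij h
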